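/- Let X be a locally compact, σ-compact Hausdorff space, let X̂ be a compact Hausdorff space containing X as a dense open subspace, let f be a closed relation on X, and let f̂ be the closure of f in X̂ × X̂. If x, y ∈ X and (x,y) ∈ 𝒢f̂, then either (x,y) ∈ 𝒢f (computed in X × X) or there exists z ∈ X̂ ∖ X such that (x,z) ∈ 𝒢f̂ and (z,y) ∈ 𝒢f̂. -/

import Mathlib

/-- The image of a set `A` under a relation `f ⊆ X × Y`. -/
def relImage {X Y : Type*} (f : Set (X × Y)) (A : Set X) : Set Y :=
  {y | ∃ x ∈ A, (x, y) ∈ f}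

/-- The reverse (inverse) relation of `f ⊆ X × Y`. -/
def relInv {X Y : Type*} (f : Set (X × Y)) : Set (Y × X) :=
  {p | (p.2, p.1) ∈ f}

/-- Composition of relations: `relComp g f = g ∘ f` (first `f`, then `g`). -/
def relComp {X Y Z : Type*} (g : Set (Y × Z)) (f : Set (X × Y)) : Set (X × Z) :=
  {p | ∃ y, (p.1, y) ∈ f ∧ (y, p.2) ∈ g}

/-- A relation on `X` is transitive. -/
def RelTrans {X : Type*} (f : Set (X × X)) : Prop :=
  ∀ x y z : X, (x, y) ∈ f → (y, z) ∈ f → (x, z) ∈ f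

/-- `gRel f` is the smallest closed transitive relation containing `f`:
the intersection of all closed transitive relations containing `f`. -/
def gRel {X : Type*} [TopologicalSpace X] (f : Set (X × X)) : Set (X × X) :=
  ⋂₀ {g : Set (X × X) | f ⊆ g ∧ IsClosed g ∧ RelTrans g}


lemma gRel_isClosed' {X : Type*} [TopologicalSpace X] (f : Set (X × X)) :
    IsClosed (gRel f) :=
  isClosed_sInter fun _ hg => hg.2.1

lemma gRel_trans' {X : Type*} [TopologicalSpace X] (f : Set (X × X)) :
    RelTrans (gRel f) := by
  intro a b c hab hbc g hg
  exact hg.2.2 a b c (hab g hg) (hbc g hg)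

lemma subset_gRel' {X : Type*} [TopologicalSpace X] (f : Set (X × X)) :
    f ⊆ gRel f := fun p hp g hg => hg.1 hp

lemma gRel_min' {X : Type*} [TopologicalSpace X] {f g : Set (X × X)}
    (h1 : f ⊆ g) (h2 : IsClosed g) (h3 : RelTrans g) : gRel f ⊆ g :=
  Set.sInter_subset_of_mem ⟨h1, h2, h3⟩

/-- Let `X` be locally compact, σ-compact Hausdorff, embedded as a dense
open subspace of a compact Hausdorff space `X̂` (via an embedding `j`), let `f` be a
closed relation on `X` and `f̂` the closure of `f` in `X̂ × X̂`.  If `x, y ∈ X` and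
`(x,y) ∈ 𝒢f̂`, then either `(x,y) ∈ 𝒢f` or there is `z ∈ X̂ ∖ X` with
`(x,z), (z,y) ∈ 𝒢f̂`. -/
theorem gRel_compactification_dichotomy
    {X : Type*} [TopologicalSpace X] [LocallyCompactSpace X]
    [SigmaCompactSpace X] [T2Space X]
    {Xh : Type*} [TopologicalSpace Xh] [CompactSpace Xh] [T2Space Xh]
    (j : X → Xh) (hj : Topology.IsEmbedding j)
    (hopen : IsOpen (Set.range j)) (hdense : Dense (Set.range j))
    (f : Set (X × X)) (hf : IsClosed f)
    (fh : Set (Xh × Xh)) (hfh : fh = closure (Prod.map j j '' f))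
    (x y : X) (hxy : (j x, j y) ∈ gRel fh) :
    (x, y) ∈ gRel f ∨
      ∃ z : Xh, z ∉ Set.range j ∧ (j x, z) ∈ gRel fh ∧ (z, j y) ∈ gRel fh := by

  classical
  set S : Set (Xh × Xh) := gRel fh with hS
  have hSclosed : IsClosed S := gRel_isClosed' fh
  have hStrans : RelTrans S := gRel_trans' fh
  have hfhS : fh ⊆ S := subset_gRel' fh
  set A : Set (Xh × Xh) := Prod.map j j '' gRel f with hA
  set B : Set (Xh × Xh) :=
    {p : Xh × Xh | ∃ z, z ∉ Set.range j ∧ (p.1, z) ∈ S ∧ (z, p.2) ∈ S} with hB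
  set K : Set (Xh × Xh) := Set.range j ×ˢ Set.range j with hK
  have hjj : Topology.IsEmbedding (Prod.map j j) := hj.prodMap hj
  -- gRel f maps into S
  have hgfS : gRel f ⊆ Prod.map j j ⁻¹' S := by
    apply gRel_min'
    · intro p hp
      have : Prod.map j j p ∈ Prod.map j j '' f := Set.mem_image_of_mem _ hp
      exact hfhS (hfh ▸ subset_closure this)
    · exact hSclosed.preimage (hj.continuous.prodMap hj.continuous)
    · intro a b c hab hbc
      exact hStrans _ _ _ hab hbc
  have hAS : A ⊆ S := by
    rintro p ⟨q, hq, rfl⟩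
    exact hgfS hq
  have hclAS : closure A ⊆ S := hSclosed.closure_subset_iff.mpr hAS
  have hBS : B ⊆ S := by
    rintro ⟨a, b⟩ ⟨z, _, h1, h2⟩
    exact hStrans a z b h1 h2
  -- points of closure A inside K are in A
  have hclAK : ∀ p ∈ closure A, p ∈ K → p ∈ A := by
    rintro ⟨a, b⟩ hp ⟨⟨x', rfl⟩, ⟨y', rfl⟩⟩
    have : (x', y') ∈ closure (gRel f) := by
      rw [hjj.closure_eq_preimage_closure_image (gRel f)]
      exact hp
    rw [(gRel_isClosed' f).closure_eq] at this
    exact ⟨(x', y'), this, rfl⟩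
  -- B is closed
  have hBclosed : IsClosed B := by
    have hBeq : B = (fun p : Xh × Xh × Xh => (p.1, p.2.2)) ''
        {p : Xh × Xh × Xh | (p.1, p.2.1) ∈ S ∧ p.2.1 ∈ (Set.range j)ᶜ ∧
          (p.2.1, p.2.2) ∈ S} := by
      ext ⟨a, b⟩
      constructor
      · rintro ⟨z, hz, h1, h2⟩
        exact ⟨(a, z, b), ⟨h1, hz, h2⟩, rfl⟩
      · rintro ⟨⟨a', z, b'⟩, ⟨h1, hz, h2⟩, heq⟩
        obtain ⟨rfl, rfl⟩ : a' = a ∧ b' = b := by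
          simpa [Prod.ext_iff] using heq
        exact ⟨z, hz, h1, h2⟩
    rw [hBeq]
    have hTclosed : IsClosed {p : Xh × Xh × Xh | (p.1, p.2.1) ∈ S ∧
        p.2.1 ∈ (Set.range j)ᶜ ∧ (p.2.1, p.2.2) ∈ S} := by
      apply IsClosed.inter
      · exact hSclosed.preimage (by fun_prop)
      apply IsClosed.inter
      · exact (isClosed_compl_iff.mpr hopen).preimage (by fun_prop)
      · exact hSclosed.preimage (by fun_prop)
    exact (hTclosed.isCompact.image (by fun_prop)).isClosed
  set G : Set (Xh × Xh) := (S ∩ Kᶜ) ∪ closure A ∪ B with hG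
  have hGS : G ⊆ S := by
    rintro p (( ⟨h, _⟩ | h) | h)
    · exact h
    · exact hclAS h
    · exact hBS h
  have hGclosed : IsClosed G :=
    ((hSclosed.inter (isClosed_compl_iff.mpr (hopen.prod hopen))).union
      isClosed_closure).union hBclosed
  have hGtrans : RelTrans G := by
    intro a b c hab hbc
    have haS : (a, b) ∈ S := hGS hab
    have hbS : (b, c) ∈ S := hGS hbc
    have hacS : (a, c) ∈ S := hStrans a b c haS hbS
    by_cases ha : a ∈ Set.range j
    · by_cases hc : c ∈ Set.range j
      · by_cases hb : b ∈ Set.range j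
        · -- all three in range j
          have hab' : (a, b) ∈ A ∨ (a, b) ∈ B := by
            rcases hab with ((⟨_, hk⟩ | h) | h)
            · exact absurd ⟨ha, hb⟩ hk
            · exact Or.inl (hclAK _ h ⟨ha, hb⟩)
            · exact Or.inr h
          have hbc' : (b, c) ∈ A ∨ (b, c) ∈ B := by
            rcases hbc with ((⟨_, hk⟩ | h) | h)
            · exact absurd ⟨hb, hc⟩ hk
            · exact Or.inl (hclAK _ h ⟨hb, hc⟩)
            · exact Or.inr h
          rcases hab' with hab' | ⟨z, hz, h1, h2⟩
          · rcases hbc' with hbc' | ⟨z, hz, h1, h2⟩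
            · obtain ⟨⟨x1, y1⟩, hm1, he1⟩ := hab'
              obtain ⟨⟨x2, y2⟩, hm2, he2⟩ := hbc'
              obtain ⟨e1a, e1b⟩ : j x1 = a ∧ j y1 = b := by
                simpa [Prod.ext_iff] using he1
              obtain ⟨e2a, e2b⟩ : j x2 = b ∧ j y2 = c := by
                simpa [Prod.ext_iff] using he2
              have : y1 = x2 := hj.injective (by rw [e1b, e2a])
              subst this
              refine Or.inl (Or.inr (subset_closure ?_))
              exact ⟨(x1, y2), gRel_trans' f _ _ _ hm1 hm2, by
                simp [Prod.map, e1a, e2b]⟩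
            · -- (b,c) via z outside
              exact Or.inr ⟨z, hz, hStrans a b z haS h1, h2⟩
          · -- (a,b) via z outside
            exact Or.inr ⟨z, hz, h1, hStrans z b c h2 hbS⟩
        · -- b outside range j
          exact Or.inr ⟨b, hb, haS, hbS⟩
      · exact Or.inl (Or.inl ⟨hacS, fun hk => hc hk.2⟩)
    · exact Or.inl (Or.inl ⟨hacS, fun hk => ha hk.1⟩)
  have hfhG : fh ⊆ G := by
    intro p hp
    refine Or.inl (Or.inr ?_)
    have : fh ⊆ closure A := by
      rw [hfh]
      exact closure_mono (Set.image_mono (subset_gRel' f))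
    exact this hp
  have hmain : (j x, j y) ∈ G := gRel_min' hfhG hGclosed hGtrans hxy
  rcases hmain with ((⟨_, hk⟩ | h) | ⟨z, hz, h1, h2⟩)
  · exact absurd ⟨⟨x, rfl⟩, ⟨y, rfl⟩⟩ hk
  · have := hclAK _ h ⟨⟨x, rfl⟩, ⟨y, rfl⟩⟩
    obtain ⟨⟨x1, y1⟩, hm, he⟩ := this
    obtain ⟨e1, e2⟩ : j x1 = j x ∧ j y1 = j y := by
      simpa [Prod.ext_iff] using he
    have hx1 : x1 = x := hj.injective e1
    have hy1 : y1 = y := hj.injective e2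
    subst hx1; subst hy1
    exact Or.inl hm
  · exact Or.inr ⟨z, hz, h1, h2⟩
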